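/- arXiv:2009.13865 — 6 statements merged into one kernel-verified Lean document; each statement's English description precedes it below -/
import Mathlib

section
/- Let X and W be finite types, let p : X → ℝ be nonnegative with ∑_x p(x) = 1, and let ψ : X × W → ℂ satisfy ∑_{x,w} |ψ(x,w)|² ≤ 1. Then ∑_x p(x) · √(∑_w |ψ(x,w)|²) ≤ √(max_x p(x)). -/
/-- The Jensen-inequality bound from the proof of Lemma 6 of the paper: for any
subnormalized state `ψ` on registers `X × W` independent of a sample `x` drawn
from the distribution `p`, the expected Euclidean norm of the projection of `ψ`
onto `|x⟩` is at most the square root of the optimal guessing probability of `p`. -/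
theorem guessing_norm_bound (X W : Type*) [Fintype X] [Fintype W]
    (p : X → ℝ) (hp : ∀ x, 0 ≤ p x) (hsum : ∑ x, p x = 1)
    (ψ : X × W → ℂ) (hψ : ∑ q : X × W, ‖ψ q‖ ^ 2 ≤ 1) :
    ∑ x, p x * Real.sqrt (∑ w, ‖ψ (x, w)‖ ^ 2) ≤
      Real.sqrt (⨆ x, p x) := by
  have hne : Nonempty X := by
    rcases isEmpty_or_nonempty X with h | h
    · simp at hsum
    · exact h
  set a : X → ℝ := fun x => ∑ w, ‖ψ (x, w)‖ ^ 2 with ha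
  have ha0 : ∀ x, 0 ≤ a x := fun x =>
    Finset.sum_nonneg fun w _ => sq_nonneg _
  have hasum : ∑ x, a x ≤ 1 := by
    simpa [ha, Fintype.sum_prod_type] using hψ
  have hbdd : BddAbove (Set.range p) := (Set.finite_range p).bddAbove
  have hsup : ∀ x, p x ≤ ⨆ x, p x := fun x => le_ciSup hbdd x
  have hsup0 : 0 ≤ ⨆ x, p x := le_trans (hp (Classical.arbitrary X)) (hsup _)
  -- Cauchy-Schwarz step
  have key : (∑ x, p x * Real.sqrt (a x)) ^ 2 ≤ ∑ x, p x * a x := by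
    have cs := Finset.sum_sq_le_sum_mul_sum_of_sq_eq_mul Finset.univ
      (r := fun x => p x * Real.sqrt (a x)) (f := p) (g := fun x => p x * a x)
      (fun x _ => hp x) (fun x _ => mul_nonneg (hp x) (ha0 x))
      (fun x _ => by
        rw [mul_pow, Real.sq_sqrt (ha0 x)]; ring)
    simpa [hsum] using cs
  have h2 : ∑ x, p x * a x ≤ ⨆ x, p x := by
    calc ∑ x, p x * a x ≤ ∑ x, (⨆ x, p x) * a x := by
          apply Finset.sum_le_sum
          intro x _
          exact mul_le_mul_of_nonneg_right (hsup x) (ha0 x)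
      _ = (⨆ x, p x) * ∑ x, a x := by rw [Finset.mul_sum]
      _ ≤ (⨆ x, p x) * 1 := mul_le_mul_of_nonneg_left hasum hsup0
      _ = ⨆ x, p x := mul_one _
  have hL0 : 0 ≤ ∑ x, p x * Real.sqrt (a x) :=
    Finset.sum_nonneg fun x _ => mul_nonneg (hp x) (Real.sqrt_nonneg _)
  have := Real.sqrt_le_sqrt (le_trans key h2)
  rwa [Real.sqrt_sq hL0] at this
end

section
/- Let λ, m, q ∈ ℕ with q ≥ 1, let X = (Fin λ → Bool), Y = (Fin m → Bool) with bitwise XOR, and let W be a finite type. Work on the Hilbert space ℋ of complex functions on Y × X × Y × W (an output register, a query-input register, a query-output register, and an auxiliary register). For H : X → Y, let O^H be the oracle unitary acting on the query-input and query-output registers and as the identity on the other two. Let U be any unitary on ℋ, let Π⁰ be an orthogonal projection on ℋ, and set Π¹ = 1 − Π⁰. Let p : X → ℝ be nonnegative with ∑_x p(x) = 1, and for each x ∈ X let ψ_x be a unit vector on the last three registers. Then ½·E_H ∑_x p(x) ‖Π⁰ (U O^H)^q (|H(x)⟩ ⊗ ψ_x)‖² + ½·E_H ∑_x p(x) 2^{−m}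 ∑_{z ∈ Y} ‖Π¹ (U O^H)^q (|z⟩ ⊗ ψ_x)‖² ≤ ½ + (3q + 2)·q·M, where E_H denotes the uniform average over all functions H : X → Y, P_x is the orthogonal projection onto basis states whose query-input register equals x, and M = ½·E_H ∑_x p(x) · 2^{−m} ∑_z (1/q) ∑_{k=0}^{q−1} ‖P_x (U O^{H_{x,z}})^k (|z⟩ ⊗ ψ_x)‖ + ½·E_H ∑_x p(x) · 2^{−m} ∑_z (1/q) ∑_{k=0}^{q−1} ‖P_x (U O^H)^k (|z⟩ ⊗ ψ_x)‖. -/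
open Matrix Finset

/-- Squared Euclidean norm of a complex vector. -/
noncomputable def nsq {ι : Type*} [Fintype ι] (v : ι → ℂ) : ℝ :=
  ∑ i, ‖v i‖ ^ 2

/-- Euclidean norm of a complex vector. -/
noncomputable def nrm {ι : Type*} [Fintype ι] (v : ι → ℂ) : ℝ :=
  Real.sqrt (nsq v)

/-- Bitwise XOR of Boolean strings. -/
def xorV {m : ℕ} (a b : Fin m → Bool) : Fin m → Bool := fun i => xor (a i) (b i)

/-- The oracle unitary `O^H` of `H : X → Y` on the Hilbert space of complex
functions on `Y × X × Y × W` (output register, query-input register, query-output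
register, auxiliary register), acting as
`|y₀, x, y, w⟩ ↦ |y₀, x, y ⊕ H(x), w⟩`. -/
def o2hOracle {l m : ℕ} {W : Type*} [DecidableEq W] (H : (Fin l → Bool) → (Fin m → Bool)) :
    Matrix ((Fin m → Bool) × (Fin l → Bool) × (Fin m → Bool) × W)
      ((Fin m → Bool) × (Fin l → Bool) × (Fin m → Bool) × W) ℂ :=
  Matrix.of fun p q =>
    if p.1 = q.1 ∧ p.2.1 = q.2.1 ∧ p.2.2.1 = xorV q.2.2.1 (H q.2.1) ∧ p.2.2.2 = q.2.2.2
    then 1 else 0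

/-- The orthogonal projection `P_x` onto basis states whose query-input register
equals `x`. -/
def pquery {l m : ℕ} {W : Type*} [DecidableEq W] (x : Fin l → Bool) :
    Matrix ((Fin m → Bool) × (Fin l → Bool) × (Fin m → Bool) × W)
      ((Fin m → Bool) × (Fin l → Bool) × (Fin m → Bool) × W) ℂ :=
  Matrix.diagonal fun p => if p.2.1 = x then 1 else 0

/-- The state `|z⟩ ⊗ φ`, with `z` in the output register and `φ` on the last
three registers. -/
def tensVec {l m : ℕ} {W : Type*} (z : Fin m → Bool)
    (φ : (Fin l → Bool) × (Fin m → Bool) × W → ℂ) :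
    (Fin m → Bool) × (Fin l → Bool) × (Fin m → Bool) × W → ℂ :=
  fun p => (if p.1 = z then 1 else 0) * φ p.2

/-! ### Auxiliary norm lemmas -/

lemma nrm_eq_norm {ι : Type*} [Fintype ι] (v : ι → ℂ) :
    nrm v = ‖(WithLp.equiv 2 (ι → ℂ)).symm v‖ := by
  rw [nrm, nsq, EuclideanSpace.norm_eq]
  simp

lemma nsq_nonneg {ι : Type*} [Fintype ι] (v : ι → ℂ) : 0 ≤ nsq v :=
  Finset.sum_nonneg fun i _ => by positivity

lemma nrm_sq {ι : Type*} [Fintype ι] (v : ι → ℂ) : nrm v ^ 2 = nsq v :=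
  Real.sq_sqrt (nsq_nonneg v)

lemma nrm_nonneg {ι : Type*} [Fintype ι] (v : ι → ℂ) : 0 ≤ nrm v := Real.sqrt_nonneg _

lemma nrm_sub_le {ι : Type*} [Fintype ι] (a b : ι → ℂ) : nrm a - nrm b ≤ nrm (a - b) := by
  rw [nrm_eq_norm, nrm_eq_norm, nrm_eq_norm]
  have : (WithLp.equiv 2 (ι → ℂ)).symm (a - b) =
      (WithLp.equiv 2 (ι → ℂ)).symm a - (WithLp.equiv 2 (ι → ℂ)).symm b := rfl
  rw [this]
  exact norm_sub_norm_le _ _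

lemma nrm_sub_le' {ι : Type*} [Fintype ι] (a b : ι → ℂ) : nrm (a - b) ≤ nrm a + nrm b := by
  rw [nrm_eq_norm, nrm_eq_norm, nrm_eq_norm]
  have : (WithLp.equiv 2 (ι → ℂ)).symm (a - b) =
      (WithLp.equiv 2 (ι → ℂ)).symm a - (WithLp.equiv 2 (ι → ℂ)).symm b := rfl
  rw [this]
  exact norm_sub_le _ _

lemma nrm_sum_le {ι κ : Type*} [Fintype ι] (s : Finset κ) (f : κ → ι → ℂ) :
    nrm (∑ k ∈ s, f k) ≤ ∑ k ∈ s, nrm (f k) := by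
  simp only [nrm_eq_norm]
  have : (WithLp.equiv 2 (ι → ℂ)).symm (∑ k ∈ s, f k) =
      ∑ k ∈ s, (WithLp.equiv 2 (ι → ℂ)).symm (f k) := by
    classical
    induction s using Finset.induction with
    | empty => rfl
    | insert a s h ih =>
      rw [Finset.sum_insert h, Finset.sum_insert h, ← ih]
      rfl
  rw [this]
  exact norm_sum_le _ _

lemma nrm_mono {ι : Type*} [Fintype ι] {v w : ι → ℂ} (h : nsq v ≤ nsq w) :
    nrm v ≤ nrm w := Real.sqrt_le_sqrt h

lemma nsq_eq_re_dot {ι : Type*} [Fintype ι] (v : ι → ℂ) :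
    nsq v = (star v ⬝ᵥ v).re := by
  rw [nsq, dotProduct, Complex.re_sum]
  refine Finset.sum_congr rfl fun i _ => ?_
  simp [Pi.star_apply, Complex.sq_norm, ← Complex.normSq_eq_conj_mul_self]

lemma dot_mulVec_self {ι : Type*} [Fintype ι] (M : Matrix ι ι ℂ) (v : ι → ℂ) :
    star (M.mulVec v) ⬝ᵥ (M.mulVec v) = star v ⬝ᵥ ((Mᴴ * M).mulVec v) := by
  rw [star_mulVec, dotProduct_mulVec, vecMul_vecMul, ← dotProduct_mulVec]

lemma nsq_mulVec_unitary {ι : Type*} [Fintype ι] [DecidableEq ι] (M : Matrix ι ι ℂ)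
    (hM : Mᴴ * M = 1) (v : ι → ℂ) : nsq (M.mulVec v) = nsq v := by
  rw [nsq_eq_re_dot, nsq_eq_re_dot, dot_mulVec_self, hM, Matrix.one_mulVec]

lemma nsq_proj_add {ι : Type*} [Fintype ι] [DecidableEq ι] (P : Matrix ι ι ℂ)
    (hidem : P * P = P) (hherm : Pᴴ = P) (v : ι → ℂ) :
    nsq (P.mulVec v) + nsq ((1 - P).mulVec v) = nsq v := by
  have h1 : Pᴴ * P = P := by rw [hherm, hidem]
  have h2 : (1 - P)ᴴ * (1 - P) = 1 - P := by
    rw [conjTranspose_sub, conjTranspose_one, hherm]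
    rw [Matrix.sub_mul, Matrix.mul_sub, Matrix.mul_sub, hidem]
    simp [Matrix.one_mul, Matrix.mul_one]
  rw [nsq_eq_re_dot, nsq_eq_re_dot, nsq_eq_re_dot, dot_mulVec_self, dot_mulVec_self,
    h1, h2, ← Complex.add_re, ← dotProduct_add, ← Matrix.add_mulVec]
  simp

lemma nsq_proj_le {ι : Type*} [Fintype ι] [DecidableEq ι] (P : Matrix ι ι ℂ)
    (hidem : P * P = P) (hherm : Pᴴ = P) (v : ι → ℂ) :
    nsq (P.mulVec v) ≤ nsq v := by
  have := nsq_proj_add P hidem hherm v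
  have h2 := nsq_nonneg ((1 - P).mulVec v)
  linarith

lemma sum_mulVec' {ι κ : Type*} [Fintype ι] (s : Finset κ) (A : κ → Matrix ι ι ℂ)
    (v : ι → ℂ) : (∑ k ∈ s, A k).mulVec v = ∑ k ∈ s, (A k).mulVec v := by
  funext p
  simp only [Matrix.mulVec, dotProduct, Matrix.sum_apply, Finset.sum_apply, Finset.sum_mul]
  rw [Finset.sum_comm]

/-! ### Oracle lemmas -/

lemma xorV_cancel {m : ℕ} (a b : Fin m → Bool) : xorV (xorV a b) b = a := by
  funext i; simp [xorV]

section Oracle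

variable {l m : ℕ} {W : Type*} [DecidableEq W] [Fintype W]

def oflip (H : (Fin l → Bool) → (Fin m → Bool)) :
    ((Fin m → Bool) × (Fin l → Bool) × (Fin m → Bool) × W) →
    ((Fin m → Bool) × (Fin l → Bool) × (Fin m → Bool) × W) :=
  fun p => (p.1, p.2.1, xorV p.2.2.1 (H p.2.1), p.2.2.2)

omit [DecidableEq W] [Fintype W] in
lemma oflip_invol (H : (Fin l → Bool) → (Fin m → Bool)) :
    Function.Involutive (oflip (W := W) H) := by
  intro p; simp [oflip, xorV_cancel]

lemma o2h_mulVec (H : (Fin l → Bool) → (Fin m → Bool))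
    (v : (Fin m → Bool) × (Fin l → Bool) × (Fin m → Bool) × W → ℂ) (p) :
    (o2hOracle H).mulVec v p = v (oflip H p) := by
  classical
  rw [Matrix.mulVec, dotProduct]
  rw [Finset.sum_eq_single (oflip H p)]
  · have : (o2hOracle H) p (oflip H p) = 1 := by
      simp [o2hOracle, oflip, xorV_cancel]
    rw [this, one_mul]
  · intro q _ hq
    have : (o2hOracle H) p q = 0 := by
      rw [o2hOracle, Matrix.of_apply, if_neg]
      intro ⟨h1, h2, h3, h4⟩
      apply hq
      have : q.2.2.1 = xorV p.2.2.1 (H p.2.1) := by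
        rw [h3, h2, xorV_cancel]
      rw [oflip, Prod.ext_iff, Prod.ext_iff, Prod.ext_iff]
      exact ⟨h1.symm, h2.symm, this, h4.symm⟩
    rw [this, zero_mul]
  · intro h; exact absurd (Finset.mem_univ _) h

lemma nsq_o2h_mulVec (H : (Fin l → Bool) → (Fin m → Bool))
    (v : (Fin m → Bool) × (Fin l → Bool) × (Fin m → Bool) × W → ℂ) :
    nsq ((o2hOracle H).mulVec v) = nsq v := by
  unfold nsq
  rw [show (∑ p, ‖(o2hOracle H).mulVec v p‖ ^ 2) =
      ∑ p, ‖v (oflip H p)‖ ^ 2 from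
    Finset.sum_congr rfl fun p _ => by rw [o2h_mulVec]]
  exact Fintype.sum_equiv ((oflip_invol (W := W) H).toPerm _) _ _ (fun p => rfl)

lemma diff_mulVec_pquery (H : (Fin l → Bool) → (Fin m → Bool)) (x : Fin l → Bool)
    (z : Fin m → Bool)
    (v : (Fin m → Bool) × (Fin l → Bool) × (Fin m → Bool) × W → ℂ) :
    (o2hOracle (Function.update H x z) - o2hOracle H).mulVec v =
    (o2hOracle (Function.update H x z) - o2hOracle H).mulVec ((pquery x).mulVec v) := by
  classical
  funext p
  rw [Matrix.mulVec, Matrix.mulVec, dotProduct, dotProduct]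
  refine Finset.sum_congr rfl fun q _ => ?_
  have hpq : (pquery (l := l) (m := m) (W := W) x).mulVec v q
      = if q.2.1 = x then v q else 0 := by
    rw [pquery, Matrix.mulVec, dotProduct, Finset.sum_eq_single q]
    · rw [Matrix.diagonal_apply_eq]; split <;> simp
    · intro b _ hb; rw [Matrix.diagonal_apply_ne _ (Ne.symm hb), zero_mul]
    · intro h; exact absurd (Finset.mem_univ _) h
  rw [hpq]
  by_cases hx : q.2.1 = x
  · rw [if_pos hx]
  · have : Function.update H x z q.2.1 = H q.2.1 := Function.update_of_ne hx _ _
    have hz : o2hOracle (Function.update H x z) p q = o2hOracle (W := W) H p q := by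
      simp only [o2hOracle, Matrix.of_apply, this]
    rw [if_neg hx, Matrix.sub_apply, hz, sub_self, zero_mul, mul_zero]

lemma nsq_pow_oracle (U : Matrix ((Fin m → Bool) × (Fin l → Bool) × (Fin m → Bool) × W)
      ((Fin m → Bool) × (Fin l → Bool) × (Fin m → Bool) × W) ℂ)
    (hU₂ : Uᴴ * U = 1) (H : (Fin l → Bool) → (Fin m → Bool)) (k : ℕ)
    (v : (Fin m → Bool) × (Fin l → Bool) × (Fin m → Bool) × W → ℂ) :
    nsq (((U * o2hOracle H) ^ k).mulVec v) = nsq v := by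
  induction k generalizing v with
  | zero => rw [pow_zero, Matrix.one_mulVec]
  | succ k ih =>
    rw [pow_succ, ← Matrix.mulVec_mulVec, ← Matrix.mulVec_mulVec, ih,
      nsq_mulVec_unitary U hU₂, nsq_o2h_mulVec]

set_option synthInstance.maxHeartbeats 1000000 in
lemma nsq_tensVec {l' : ℕ} {W' : Type*} [Fintype W'] (z : Fin m → Bool)
    (φ : (Fin l' → Bool) × (Fin m → Bool) × W' → ℂ) :
    nsq (tensVec z φ) = nsq φ := by
  rw [nsq, nsq, Fintype.sum_prod_type]
  have h : ∀ y : Fin m → Bool, (∑ r, ‖tensVec z φ (y, r)‖ ^ 2)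
      = if y = z then ∑ r, ‖φ r‖ ^ 2 else 0 := by
    intro y
    by_cases hy : y = z <;> simp [tensVec, hy]
  rw [Finset.sum_congr rfl fun y _ => h y]
  simp

end Oracle

/-! ### Telescoping and averaging lemmas -/

lemma pow_sub_pow_tel {R : Type*} [Ring R] (A B : R) (n : ℕ) :
    A ^ n - B ^ n = ∑ k ∈ Finset.range n, A ^ (n - 1 - k) * (A - B) * B ^ k := by
  induction n with
  | zero => simp
  | succ n ih =>
    have : A ^ (n + 1) - B ^ (n + 1) = A * (A ^ n - B ^ n) + (A - B) * B ^ n := by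
      rw [pow_succ', pow_succ' B, mul_sub, sub_mul]
      abel
    rw [this, ih, Finset.mul_sum, Finset.sum_range_succ]
    congr 1
    · refine Finset.sum_congr rfl fun k hk => ?_
      have hk' : k < n := Finset.mem_range.mp hk
      have : n + 1 - 1 - k = (n - 1 - k) + 1 := by omega
      rw [this, pow_succ']
      simp only [mul_assoc]
    · simp

lemma reindex_update {α β : Type*} [Fintype α] [Fintype β] [DecidableEq α] [DecidableEq β]
    (x : α) (f : (α → β) → β → ℝ) :
    ∑ H : α → β, ∑ z : β, f (Function.update H x z) z
      = (Fintype.card β : ℝ) * ∑ H : α → β, f H (H x) := by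
  have hinv : Function.Involutive
      (fun p : (α → β) × β => (Function.update p.1 x p.2, p.1 x)) := by
    intro p
    simp [Function.update_idem, Function.update_eq_self]
  have h1 : ∑ H : α → β, ∑ z : β, f (Function.update H x z) z
      = ∑ p : (α → β) × β, f (Function.update p.1 x p.2) p.2 := by
    rw [Fintype.sum_prod_type]
  have h2 : ∑ p : (α → β) × β, f (Function.update p.1 x p.2) p.2
      = ∑ p : (α → β) × β, f p.1 (p.1 x) := by
    rw [← Equiv.sum_comp hinv.toPerm
      (fun p : (α → β) × β => f (Function.update p.1 x p.2) p.2)]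
    refine Finset.sum_congr rfl fun p _ => ?_
    show f (Function.update (Function.update p.1 x p.2) x (p.1 x)) (p.1 x) = f p.1 (p.1 x)
    rw [Function.update_idem, Function.update_eq_self]
  rw [h1, h2, Fintype.sum_prod_type_right]
  simp [mul_comm]

section Key

variable {l m : ℕ} {W : Type*} [DecidableEq W] [Fintype W]

lemma nrm_pow_oracle (U : Matrix ((Fin m → Bool) × (Fin l → Bool) × (Fin m → Bool) × W)
      ((Fin m → Bool) × (Fin l → Bool) × (Fin m → Bool) × W) ℂ)
    (hU₂ : Uᴴ * U = 1) (H : (Fin l → Bool) → (Fin m → Bool)) (k : ℕ)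
    (v : (Fin m → Bool) × (Fin l → Bool) × (Fin m → Bool) × W → ℂ) :
    nrm (((U * o2hOracle H) ^ k).mulVec v) = nrm v := by
  rw [nrm, nrm, nsq_pow_oracle U hU₂]

lemma key_pointwise (q : ℕ)
    (U : Matrix ((Fin m → Bool) × (Fin l → Bool) × (Fin m → Bool) × W)
      ((Fin m → Bool) × (Fin l → Bool) × (Fin m → Bool) × W) ℂ)
    (hU₂ : Uᴴ * U = 1)
    (P0 : Matrix ((Fin m → Bool) × (Fin l → Bool) × (Fin m → Bool) × W)
      ((Fin m → Bool) × (Fin l → Bool) × (Fin m → Bool) × W) ℂ)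
    (hidem : P0 * P0 = P0) (hherm : P0ᴴ = P0)
    (H : (Fin l → Bool) → (Fin m → Bool)) (x : Fin l → Bool) (z : Fin m → Bool)
    (φ : (Fin m → Bool) × (Fin l → Bool) × (Fin m → Bool) × W → ℂ) (hφ : nsq φ = 1) :
    nsq ((P0 * (U * o2hOracle (Function.update H x z)) ^ q).mulVec φ) +
      nsq (((1 - P0) * (U * o2hOracle H) ^ q).mulVec φ) ≤
    1 + 4 * ∑ k ∈ Finset.range q,
      nrm ((pquery x).mulVec (((U * o2hOracle H) ^ k).mulVec φ)) := by
  set A := U * o2hOracle (Function.update H x z) with hA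
  set B := U * o2hOracle H with hB
  set S := ∑ k ∈ Finset.range q, nrm ((pquery x).mulVec ((B ^ k).mulVec φ)) with hS
  have hSnn : 0 ≤ S := Finset.sum_nonneg fun k _ => nrm_nonneg _
  -- unitarity of powers
  have hAq : nsq ((A ^ q).mulVec φ) = 1 := by rw [hA, nsq_pow_oracle U hU₂, hφ]
  have hBq : nsq ((B ^ q).mulVec φ) = 1 := by rw [hB, nsq_pow_oracle U hU₂, hφ]
  -- decompose
  rw [← Matrix.mulVec_mulVec, ← Matrix.mulVec_mulVec]
  set a := nrm (P0.mulVec ((A ^ q).mulVec φ)) with ha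
  set c := nrm (P0.mulVec ((B ^ q).mulVec φ)) with hc
  have hproj := nsq_proj_add P0 hidem hherm ((B ^ q).mulVec φ)
  have hb : nsq ((1 - P0).mulVec ((B ^ q).mulVec φ)) = 1 - c ^ 2 := by
    rw [hc, nrm_sq]; linarith [hproj, hBq]
  have haa : nsq (P0.mulVec ((A ^ q).mulVec φ)) = a ^ 2 := (nrm_sq _).symm
  rw [haa, hb]
  -- bounds on a and c
  have ha1 : a ≤ 1 := by
    have h := nrm_mono (v := P0.mulVec ((A ^ q).mulVec φ)) (w := (A ^ q).mulVec φ)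
      (nsq_proj_le P0 hidem hherm _)
    have h2 : nrm ((A ^ q).mulVec φ) = 1 := by rw [nrm, hAq, Real.sqrt_one]
    rw [ha]
    rw [h2] at h
    exact h
  have hc1 : c ≤ 1 := by
    have h := nrm_mono (v := P0.mulVec ((B ^ q).mulVec φ)) (w := (B ^ q).mulVec φ)
      (nsq_proj_le P0 hidem hherm _)
    have h2 : nrm ((B ^ q).mulVec φ) = 1 := by rw [nrm, hBq, Real.sqrt_one]
    rw [hc]
    rw [h2] at h
    exact h
  have ha0 : 0 ≤ a := nrm_nonneg _
  have hc0 : 0 ≤ c := nrm_nonneg _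
  -- difference bound
  set d := nrm ((A ^ q).mulVec φ - (B ^ q).mulVec φ) with hd
  have hd0 : 0 ≤ d := nrm_nonneg _
  have hac : a - c ≤ d := by
    calc a - c ≤ nrm (P0.mulVec ((A ^ q).mulVec φ) - P0.mulVec ((B ^ q).mulVec φ)) :=
          nrm_sub_le _ _
      _ = nrm (P0.mulVec ((A ^ q).mulVec φ - (B ^ q).mulVec φ)) := by
          rw [Matrix.mulVec_sub]
      _ ≤ d := nrm_mono (nsq_proj_le P0 hidem hherm _)
  -- telescoping bound : d ≤ 2 * S
  have hdS : d ≤ 2 * S := by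
    have htel : (A ^ q).mulVec φ - (B ^ q).mulVec φ
        = ∑ k ∈ Finset.range q, (A ^ (q - 1 - k) * (A - B) * B ^ k).mulVec φ := by
      rw [← Matrix.sub_mulVec, pow_sub_pow_tel, sum_mulVec']
    rw [hd, htel]
    calc nrm (∑ k ∈ Finset.range q, (A ^ (q - 1 - k) * (A - B) * B ^ k).mulVec φ)
        ≤ ∑ k ∈ Finset.range q, nrm ((A ^ (q - 1 - k) * (A - B) * B ^ k).mulVec φ) :=
          nrm_sum_le _ _
      _ ≤ ∑ k ∈ Finset.range q, 2 * nrm ((pquery x).mulVec ((B ^ k).mulVec φ)) := by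
          refine Finset.sum_le_sum fun k _ => ?_
          set w := (B ^ k).mulVec φ with hw
          have e1 : (A ^ (q - 1 - k) * (A - B) * B ^ k).mulVec φ
              = (A ^ (q - 1 - k)).mulVec ((A - B).mulVec w) := by
            rw [hw, Matrix.mulVec_mulVec, Matrix.mulVec_mulVec]
          rw [e1, nrm_pow_oracle U hU₂]
          have e2 : A - B = U * (o2hOracle (Function.update H x z) - o2hOracle H) := by
            rw [hA, hB, Matrix.mul_sub]
          rw [e2, ← Matrix.mulVec_mulVec]
          have e3 : nrm (U.mulVec ((o2hOracle (Function.update H x z) -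
              o2hOracle H).mulVec w)) = nrm ((o2hOracle (Function.update H x z) -
              o2hOracle H).mulVec w) := by
            rw [nrm, nrm, nsq_mulVec_unitary U hU₂]
          rw [e3, diff_mulVec_pquery, Matrix.sub_mulVec]
          set u := (pquery x).mulVec w
          calc nrm ((o2hOracle (Function.update H x z)).mulVec u -
                (o2hOracle H).mulVec u)
              ≤ nrm ((o2hOracle (Function.update H x z)).mulVec u) +
                nrm ((o2hOracle H).mulVec u) := nrm_sub_le' _ _
            _ = 2 * nrm u := by
                rw [nrm, nrm, nrm, nsq_o2h_mulVec, nsq_o2h_mulVec]; ring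
      _ = 2 * S := by rw [hS, Finset.mul_sum]
  -- conclude
  have habc : a ^ 2 - c ^ 2 ≤ 2 * d := by
    calc a ^ 2 - c ^ 2 = (a + c) * (a - c) := by ring
      _ ≤ (a + c) * d := mul_le_mul_of_nonneg_left hac (by linarith)
      _ ≤ 2 * d := mul_le_mul_of_nonneg_right (by linarith) hd0
  linarith

end Key

lemma half_merge {γ δ : Type*} [Fintype γ] [Fintype δ] (r : ℝ) (p : δ → ℝ)
    (T1 T2 : γ → δ → ℝ) :
    1 / 2 * (r * ∑ a, ∑ b, p b * T1 a b) + 1 / 2 * (r * ∑ a, ∑ b, p b * T2 a b)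
      = r * ∑ a, ∑ b, p b * (1 / 2 * T1 a b + 1 / 2 * T2 a b) := by
  have inner : ∀ a, ∑ b, p b * (1 / 2 * T1 a b + 1 / 2 * T2 a b)
      = 1 / 2 * (∑ b, p b * T1 a b) + 1 / 2 * (∑ b, p b * T2 a b) := by
    intro a
    rw [Finset.mul_sum, Finset.mul_sum, ← Finset.sum_add_distrib]
    exact Finset.sum_congr rfl fun b _ => by ring
  rw [Finset.sum_congr rfl fun a _ => inner a, Finset.sum_add_distrib,
    ← Finset.mul_sum, ← Finset.mul_sum]
  ring

lemma avg_bound {α β : Type*} [Fintype α] [Fintype β] [Nonempty α]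
    (p : β → ℝ) (hp : ∀ x, 0 ≤ p x) (hpsum : ∑ x, p x = 1)
    (F G₁ G₂ : α → β → ℝ) (hG₁ : ∀ a b, 0 ≤ G₁ a b) (hG₂ : ∀ a b, 0 ≤ G₂ a b)
    (qr C : ℝ) (hqr : 0 ≤ qr) (hC : 4 * qr ≤ C)
    (hF : ∀ a b, F a b ≤ 1 / 2 + 2 * qr * G₂ a b) :
    (Fintype.card α : ℝ)⁻¹ * ∑ a, ∑ b, p b * F a b ≤
    1 / 2 + C * (1 / 2 * ((Fintype.card α : ℝ)⁻¹ * ∑ a, ∑ b, p b * G₁ a b)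
      + 1 / 2 * ((Fintype.card α : ℝ)⁻¹ * ∑ a, ∑ b, p b * G₂ a b)) := by
  have hn : (0 : ℝ) < (Fintype.card α : ℝ) := by
    exact_mod_cast Fintype.card_pos
  set n : ℝ := (Fintype.card α : ℝ) with hn'
  set T1 : ℝ := ∑ a, ∑ b, p b * G₁ a b with hT1
  set T2 : ℝ := ∑ a, ∑ b, p b * G₂ a b with hT2
  have hT1nn : 0 ≤ T1 :=
    Finset.sum_nonneg fun a _ => Finset.sum_nonneg fun b _ => mul_nonneg (hp b) (hG₁ a b)
  have hT2nn : 0 ≤ T2 :=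
    Finset.sum_nonneg fun a _ => Finset.sum_nonneg fun b _ => mul_nonneg (hp b) (hG₂ a b)
  have h1 : ∀ a, ∑ b, p b * F a b ≤ 1 / 2 + 2 * qr * ∑ b, p b * G₂ a b := by
    intro a
    calc ∑ b, p b * F a b ≤ ∑ b, p b * (1 / 2 + 2 * qr * G₂ a b) :=
          Finset.sum_le_sum fun b _ => mul_le_mul_of_nonneg_left (hF a b) (hp b)
      _ = 1 / 2 * ∑ b, p b + 2 * qr * ∑ b, p b * G₂ a b := by
          rw [Finset.mul_sum, Finset.mul_sum, ← Finset.sum_add_distrib]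
          exact Finset.sum_congr rfl fun b _ => by ring
      _ = 1 / 2 + 2 * qr * ∑ b, p b * G₂ a b := by rw [hpsum]; ring
  have h2 : ∑ a, ∑ b, p b * F a b ≤ n * (1 / 2) + 2 * qr * T2 := by
    calc ∑ a, ∑ b, p b * F a b ≤ ∑ a, (1 / 2 + 2 * qr * ∑ b, p b * G₂ a b) :=
          Finset.sum_le_sum fun a _ => h1 a
      _ = n * (1 / 2) + 2 * qr * T2 := by
          rw [Finset.sum_add_distrib, Finset.sum_const, Finset.card_univ, nsmul_eq_mul,
            ← Finset.mul_sum, hT2, hn']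
  have hstep : n⁻¹ * ∑ a, ∑ b, p b * F a b ≤ 1 / 2 + 2 * qr * (n⁻¹ * T2) := by
    have := mul_le_mul_of_nonneg_left h2 (inv_nonneg.mpr hn.le)
    calc n⁻¹ * ∑ a, ∑ b, p b * F a b ≤ n⁻¹ * (n * (1 / 2) + 2 * qr * T2) := this
      _ = 1 / 2 + 2 * qr * (n⁻¹ * T2) := by
          rw [mul_add, ← mul_assoc, inv_mul_cancel₀ hn.ne']
          ring
  have ht1 : 0 ≤ n⁻¹ * T1 := mul_nonneg (inv_nonneg.mpr hn.le) hT1nn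
  have ht2 : 0 ≤ n⁻¹ * T2 := mul_nonneg (inv_nonneg.mpr hn.le) hT2nn
  have hC0 : 0 ≤ C := le_trans (by linarith) hC
  nlinarith [mul_le_mul_of_nonneg_right hC ht2, mul_nonneg hC0 ht1]

lemma half_avg_bound {β : Type*} [Fintype β] (A B N : β → ℝ) (c2 qr : ℝ)
    (hc2 : 0 ≤ c2) (hcard : c2 * (Fintype.card β : ℝ) = 1) (hqr : 0 < qr)
    (hkey : ∀ z, A z + B z ≤ 1 + 4 * N z) :
    1 / 2 * (c2 * ∑ z, A z) + 1 / 2 * (c2 * ∑ z, B z) ≤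
      1 / 2 + 2 * qr * (c2 * ∑ z, qr⁻¹ * N z) := by
  have hsplit : ∑ z, (1 / 2 : ℝ) * (A z + B z)
      = 1 / 2 * (∑ z, A z) + 1 / 2 * (∑ z, B z) := by
    rw [Finset.mul_sum, Finset.mul_sum, ← Finset.sum_add_distrib]
    exact Finset.sum_congr rfl fun z _ => by ring
  have hq1 : qr * qr⁻¹ = 1 := mul_inv_cancel₀ hqr.ne'
  calc 1 / 2 * (c2 * ∑ z, A z) + 1 / 2 * (c2 * ∑ z, B z)
      = c2 * ∑ z, (1 / 2 : ℝ) * (A z + B z) := by rw [hsplit]; ring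
    _ ≤ c2 * ∑ z, ((1 / 2 : ℝ) + 2 * N z) := by
        refine mul_le_mul_of_nonneg_left (Finset.sum_le_sum fun z _ => ?_) hc2
        have := hkey z
        linarith
    _ = 1 / 2 + 2 * qr * (c2 * ∑ z, qr⁻¹ * N z) := by
        rw [Finset.sum_add_distrib, Finset.sum_const, Finset.card_univ, nsmul_eq_mul,
          ← Finset.mul_sum, ← Finset.mul_sum]
        linear_combination (1 / 2) * hcard - 2 * c2 * (∑ z, N z) * hq1

set_option maxHeartbeats 2000000 in
/-- The one-way-to-hiding lemma (Lemma 7 of the paper): the distinguishing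
advantage of a `q`-query algorithm between `H(x)` and a uniformly random string
is bounded by the probability that it queries the oracle at `x`. -/
theorem one_way_to_hiding (l m q : ℕ) (hq : 1 ≤ q)
    (W : Type*) [Fintype W] [DecidableEq W]
    (U : Matrix ((Fin m → Bool) × (Fin l → Bool) × (Fin m → Bool) × W)
      ((Fin m → Bool) × (Fin l → Bool) × (Fin m → Bool) × W) ℂ)
    (hU₁ : U * Uᴴ = 1) (hU₂ : Uᴴ * U = 1)
    (P0 : Matrix ((Fin m → Bool) × (Fin l → Bool) × (Fin m → Bool) × W)
      ((Fin m → Bool) × (Fin l → Bool) × (Fin m → Bool) × W) ℂ)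
    (hidem : P0 * P0 = P0) (hherm : P0ᴴ = P0)
    (p : (Fin l → Bool) → ℝ) (hp : ∀ x, 0 ≤ p x) (hpsum : ∑ x, p x = 1)
    (ψ : (Fin l → Bool) → ((Fin l → Bool) × (Fin m → Bool) × W) → ℂ)
    (hψ : ∀ x, nsq (ψ x) = 1) :
    (1 / 2) * ((Fintype.card ((Fin l → Bool) → (Fin m → Bool)) : ℝ)⁻¹ *
        ∑ H : (Fin l → Bool) → (Fin m → Bool), ∑ x : Fin l → Bool,
          p x * nsq ((P0 * (U * o2hOracle H) ^ q).mulVec (tensVec (H x) (ψ x)))) +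
      (1 / 2) * ((Fintype.card ((Fin l → Bool) → (Fin m → Bool)) : ℝ)⁻¹ *
        ∑ H : (Fin l → Bool) → (Fin m → Bool), ∑ x : Fin l → Bool,
          p x * (((2 : ℝ) ^ m)⁻¹ * ∑ z : Fin m → Bool,
            nsq (((1 - P0) * (U * o2hOracle H) ^ q).mulVec (tensVec z (ψ x))))) ≤
      1 / 2 + ((3 * q + 2) * q : ℝ) *
        ((1 / 2) * ((Fintype.card ((Fin l → Bool) → (Fin m → Bool)) : ℝ)⁻¹ *
            ∑ H : (Fin l → Bool) → (Fin m → Bool), ∑ x : Fin l → Bool,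
              p x * (((2 : ℝ) ^ m)⁻¹ * ∑ z : Fin m → Bool,
                (q : ℝ)⁻¹ * ∑ k ∈ Finset.range q,
                  nrm ((pquery x).mulVec
                    (((U * o2hOracle (Function.update H x z)) ^ k).mulVec
                      (tensVec z (ψ x)))))) +
          (1 / 2) * ((Fintype.card ((Fin l → Bool) → (Fin m → Bool)) : ℝ)⁻¹ *
            ∑ H : (Fin l → Bool) → (Fin m → Bool), ∑ x : Fin l → Bool,
              p x * (((2 : ℝ) ^ m)⁻¹ * ∑ z : Fin m → Bool,
                (q : ℝ)⁻¹ * ∑ k ∈ Finset.range q,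
                  nrm ((pquery x).mulVec
                    (((U * o2hOracle H) ^ k).mulVec (tensVec z (ψ x))))))) := by
  have hq0 : (0 : ℝ) < (q : ℝ) := by exact_mod_cast Nat.lt_of_lt_of_le Nat.zero_lt_one hq
  have hcardY : ((Fintype.card (Fin m → Bool)) : ℝ) = (2 : ℝ) ^ m := by
    rw [Fintype.card_fun]
    push_cast
    simp
  have h2m : (0 : ℝ) < (2 : ℝ) ^ m := by positivity
  have hc2nn : (0 : ℝ) ≤ ((2 : ℝ) ^ m)⁻¹ := by positivity
  have hφ : ∀ (x : Fin l → Bool) (z : Fin m → Bool), nsq (tensVec (l := l) z (ψ x)) = 1 :=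
    fun x z => by rw [nsq_tensVec, hψ]
  -- Step 1: reindex the first term
  have hstep1 :
      ∑ H : (Fin l → Bool) → (Fin m → Bool), ∑ x : Fin l → Bool,
        p x * nsq ((P0 * (U * o2hOracle H) ^ q).mulVec (tensVec (H x) (ψ x)))
      = ∑ H : (Fin l → Bool) → (Fin m → Bool), ∑ x : Fin l → Bool,
        p x * (((2 : ℝ) ^ m)⁻¹ * ∑ z : Fin m → Bool,
          nsq ((P0 * (U * o2hOracle (Function.update H x z)) ^ q).mulVec
            (tensVec z (ψ x)))) := by
    rw [Finset.sum_comm]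
    conv_rhs => rw [Finset.sum_comm]
    refine Finset.sum_congr rfl fun x _ => ?_
    rw [← Finset.mul_sum, ← Finset.mul_sum]
    congr 1
    have hcY0 : ((Fintype.card (Fin m → Bool)) : ℝ) ≠ 0 := by
      rw [hcardY]; exact h2m.ne'
    have hrx := reindex_update x
      (fun H z => nsq ((P0 * (U * o2hOracle H) ^ q).mulVec (tensVec z (ψ x))))
    beta_reduce at hrx
    rw [← Finset.mul_sum, ← hcardY, hrx, ← mul_assoc, inv_mul_cancel₀ hcY0, one_mul]
  rw [hstep1, half_merge]
  -- Step 2: apply the averaging bound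
  refine avg_bound (α := (Fin l → Bool) → (Fin m → Bool)) p hp hpsum _ _ _ ?_ ?_ (q : ℝ) ((3 * q + 2) * q : ℝ) hq0.le ?_ ?_
  · intro H x
    exact mul_nonneg hc2nn (Finset.sum_nonneg fun z _ => mul_nonneg (by positivity)
      (Finset.sum_nonneg fun k _ => nrm_nonneg _))
  · intro H x
    exact mul_nonneg hc2nn (Finset.sum_nonneg fun z _ => mul_nonneg (by positivity)
      (Finset.sum_nonneg fun k _ => nrm_nonneg _))
  · have : (1 : ℝ) ≤ (q : ℝ) := by exact_mod_cast hq
    nlinarith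
  · -- pointwise bound
    intro H x
    have hcc : ((2 : ℝ) ^ m)⁻¹ * ((Fintype.card (Fin m → Bool)) : ℝ) = 1 := by
      rw [hcardY]; exact inv_mul_cancel₀ h2m.ne'
    have hkey := fun z : Fin m → Bool =>
      key_pointwise q U hU₂ P0 hidem hherm H x z (tensVec z (ψ x)) (hφ x z)
    exact half_avg_bound _ _ _ _ _ hc2nn hcc hq0 hkey
end

section
/- Let H be a complex inner product space, let ψ ∈ H with ‖ψ‖ = 1, let ε ≥ 0, let r ∈ ℕ, and let Π_1, …, Π_r be orthogonal projections on H such that ‖Π_i ψ‖² ≥ 1 − ε for every i ∈ {1, …, r}. Then ‖Π_r Π_{r−1} ⋯ Π_1 ψ‖² ≥ 1 − 2r√ε. -/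
open scoped InnerProductSpace

section Aux

variable {H : Type*} [NormedAddCommGroup H] [InnerProductSpace ℂ H]

private lemma proj_contract (P : H →ₗ[ℂ] H) (hidem : P ∘ₗ P = P)
    (hsym : LinearMap.IsSymmetric P) (x : H) : ‖P x‖ ≤ ‖x‖ := by
  rcases eq_or_ne (P x) 0 with h | h
  · simp [h]
  · have hpp : P (P x) = P x := LinearMap.congr_fun hidem x
    have h1 : ⟪P x, P x⟫_ℂ = ⟪x, P x⟫_ℂ := by
      rw [hsym x (P x), hpp]
    have h2 : ‖P x‖ ^ 2 = RCLike.re ⟪x, P x⟫_ℂ := by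
      rw [← h1, inner_self_eq_norm_sq]
    have h3 : RCLike.re ⟪x, P x⟫_ℂ ≤ ‖x‖ * ‖P x‖ := by
      calc RCLike.re ⟪x, P x⟫_ℂ ≤ ‖⟪x, P x⟫_ℂ‖ := RCLike.re_le_norm _
        _ ≤ ‖x‖ * ‖P x‖ := norm_inner_le_norm _ _
    have hpos : 0 < ‖P x‖ := norm_pos_iff.mpr h
    nlinarith [h2, h3]

private lemma proj_pyth (P : H →ₗ[ℂ] H) (hidem : P ∘ₗ P = P)
    (hsym : LinearMap.IsSymmetric P) (x : H) :
    ‖x - P x‖ ^ 2 = ‖x‖ ^ 2 - ‖P x‖ ^ 2 := by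
  have hpp : P (P x) = P x := LinearMap.congr_fun hidem x
  have horth : ⟪P x, x - P x⟫_ℂ = 0 := by
    rw [inner_sub_right]
    have : ⟪P x, P x⟫_ℂ = ⟪P x, x⟫_ℂ := by
      rw [← hsym (P x) x, hpp]
    rw [this, sub_self]
  have h := norm_add_sq_eq_norm_sq_add_norm_sq_of_inner_eq_zero _ _ horth
  have hx : P x + (x - P x) = x := by abel
  rw [hx] at h
  linarith

private lemma foldl_contract {r : ℕ} (P : Fin r → (H →ₗ[ℂ] H))
    (hc : ∀ i x, ‖P i x‖ ≤ ‖x‖) :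
    ∀ (l : List (Fin r)) (x y : H),
      ‖l.foldl (fun v i => P i v) x - l.foldl (fun v i => P i v) y‖ ≤ ‖x - y‖ := by
  intro l
  induction l with
  | nil => intro x y; simp
  | cons i l ih =>
    intro x y
    simp only [List.foldl_cons]
    calc ‖l.foldl (fun v i => P i v) (P i x) - l.foldl (fun v i => P i v) (P i y)‖
        ≤ ‖P i x - P i y‖ := ih _ _
      _ = ‖P i (x - y)‖ := by rw [map_sub]
      _ ≤ ‖x - y‖ := hc i _

private lemma foldl_close {r : ℕ} (P : Fin r → (H →ₗ[ℂ] H)) (ψ : H) (δ : ℝ)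
    (hc : ∀ i x, ‖P i x‖ ≤ ‖x‖) (hd : ∀ i, ‖ψ - P i ψ‖ ≤ δ) :
    ∀ l : List (Fin r), ‖ψ - l.foldl (fun v i => P i v) ψ‖ ≤ l.length * δ := by
  intro l
  induction l with
  | nil => simp
  | cons i l ih =>
    simp only [List.foldl_cons, List.length_cons]
    have h1 : ‖l.foldl (fun v i => P i v) ψ - l.foldl (fun v i => P i v) (P i ψ)‖
        ≤ ‖ψ - P i ψ‖ := foldl_contract P hc l ψ (P i ψ)
    have h2 : ‖ψ - l.foldl (fun v i => P i v) (P i ψ)‖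
        ≤ ‖ψ - l.foldl (fun v i => P i v) ψ‖ +
          ‖l.foldl (fun v i => P i v) ψ - l.foldl (fun v i => P i v) (P i ψ)‖ :=
      norm_sub_le_norm_sub_add_norm_sub _ _ _
    have h3 := hd i
    push_cast
    nlinarith [ih]

end Aux

/-- Iterated gentle measurement (Lemma 9 of the paper): if each orthogonal
projection `P i` keeps the unit vector `ψ` with probability at least `1 - ε`,
then applying all of them in sequence keeps `ψ` with probability at least
`1 - 2r√ε`.  The sequential application `Π_r ⋯ Π_1 ψ` is expressed as a left
fold applying `P 0` first. -/
theorem iterated_gentle_measurement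
    {H : Type*} [NormedAddCommGroup H] [InnerProductSpace ℂ H]
    (ψ : H) (hψ : ‖ψ‖ = 1) (ε : ℝ) (hε : 0 ≤ ε) (r : ℕ)
    (P : Fin r → (H →ₗ[ℂ] H))
    (hidem : ∀ i, (P i) ∘ₗ (P i) = P i)
    (hsym : ∀ i, LinearMap.IsSymmetric (P i))
    (hnorm : ∀ i, 1 - ε ≤ ‖P i ψ‖ ^ 2) :
    1 - 2 * r * Real.sqrt ε ≤
      ‖(List.finRange r).foldl (fun v i => P i v) ψ‖ ^ 2 := by
  have hc : ∀ i x, ‖P i x‖ ≤ ‖x‖ := fun i x => proj_contract (P i) (hidem i) (hsym i) x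
  have hd : ∀ i, ‖ψ - P i ψ‖ ≤ Real.sqrt ε := by
    intro i
    have h1 : ‖ψ - P i ψ‖ ^ 2 = ‖ψ‖ ^ 2 - ‖P i ψ‖ ^ 2 :=
      proj_pyth (P i) (hidem i) (hsym i) ψ
    have h2 : ‖ψ - P i ψ‖ ^ 2 ≤ ε := by rw [h1, hψ]; linarith [hnorm i]
    calc ‖ψ - P i ψ‖ = Real.sqrt (‖ψ - P i ψ‖ ^ 2) := by
          rw [Real.sqrt_sq (norm_nonneg _)]
      _ ≤ Real.sqrt ε := Real.sqrt_le_sqrt h2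
  have hclose := foldl_close P ψ (Real.sqrt ε) hc hd (List.finRange r)
  rw [List.length_finRange] at hclose
  set f := (List.finRange r).foldl (fun v i => P i v) ψ with hf
  set s := (r : ℝ) * Real.sqrt ε with hs
  have hs0 : 0 ≤ s := mul_nonneg (Nat.cast_nonneg _) (Real.sqrt_nonneg _)
  have htri : 1 - s ≤ ‖f‖ := by
    have := norm_sub_norm_le ψ f
    rw [hψ] at this
    linarith [hclose]
  have hf0 : 0 ≤ ‖f‖ := norm_nonneg _
  by_cases hle : s ≤ 1
  · nlinarith
  · nlinarith [sq_nonneg ‖f‖]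
end

section
/- Let H be a complex inner product space, let ψ ∈ H with ‖ψ‖ = 1, let ε ≥ 0, let r ∈ ℕ, and let Π_1, …, Π_r be orthogonal projections on H such that ‖Π_i ψ‖² ≥ 1 − ε for every i. Then for every ℓ with 0 ≤ ℓ ≤ r there exists a vector η with Π_ℓ Π_{ℓ−1} ⋯ Π_1 ψ = ψ + η and ‖η‖ ≤ ℓ·√ε. -/
open scoped ComplexOrder

private lemma proj_orth {H : Type*} [NormedAddCommGroup H] [InnerProductSpace ℂ H]
    (T : H →ₗ[ℂ] H) (hidem : T ∘ₗ T = T) (hsym : LinearMap.IsSymmetric T) (x : H) :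
    ‖x‖ ^ 2 = ‖T x‖ ^ 2 + ‖x - T x‖ ^ 2 := by
  have horth : (inner ℂ (T x) (x - T x) : ℂ) = 0 := by
    have h1 : (inner ℂ (T x) (T x) : ℂ) = inner ℂ (T x) x := by
      rw [← hsym (T x) x]
      have : T (T x) = T x := congrFun (congrArg DFunLike.coe hidem) x
      rw [this]
    rw [inner_sub_right, h1, sub_self]
  have := norm_add_sq_eq_norm_sq_add_norm_sq_of_inner_eq_zero (T x) (x - T x) horth
  simpa [add_sub_cancel, pow_two] using this

private lemma proj_norm_le {H : Type*} [NormedAddCommGroup H] [InnerProductSpace ℂ H]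
    (T : H →ₗ[ℂ] H) (hidem : T ∘ₗ T = T) (hsym : LinearMap.IsSymmetric T) (x : H) :
    ‖T x‖ ≤ ‖x‖ := by
  have h := proj_orth T hidem hsym x
  nlinarith [sq_nonneg ‖x - T x‖, norm_nonneg (T x), norm_nonneg x]

/-- The inductive claim in the proof of Lemma 9 of the paper: if each orthogonal
projection `P i` keeps the unit vector `ψ` with probability at least `1 - ε`,
then for every `ℓ ≤ r` the sequential application of the first `ℓ` projections
(`P 0` applied first) differs from `ψ` by a vector of norm at most `ℓ√ε`. -/
theorem gentle_measurement_induction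
    {H : Type*} [NormedAddCommGroup H] [InnerProductSpace ℂ H]
    (ψ : H) (hψ : ‖ψ‖ = 1) (ε : ℝ) (hε : 0 ≤ ε) (r : ℕ)
    (P : Fin r → (H →ₗ[ℂ] H))
    (hidem : ∀ i, (P i) ∘ₗ (P i) = P i)
    (hsym : ∀ i, LinearMap.IsSymmetric (P i))
    (hnorm : ∀ i, 1 - ε ≤ ‖P i ψ‖ ^ 2) :
    ∀ ℓ : ℕ, ℓ ≤ r →
      ∃ η : H, ((List.finRange r).take ℓ).foldl (fun v i => P i v) ψ = ψ + η ∧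
        ‖η‖ ≤ ℓ * Real.sqrt ε := by
  intro ℓ
  induction ℓ with
  | zero => intro _; exact ⟨0, by simp, by simp⟩
  | succ n ih =>
    intro hn
    obtain ⟨η, hfold, hη⟩ := ih (Nat.le_of_succ_le hn)
    have hnr : n < r := hn
    have htake : (List.finRange r).take (n + 1)
        = (List.finRange r).take n ++ [⟨n, hnr⟩] := by
      rw [List.take_succ]
      congr 1
      simp [List.getElem?_eq_getElem (show n < (List.finRange r).length by simpa using hnr)]
    have hfold' : ((List.finRange r).take (n + 1)).foldl (fun v i => P i v) ψ
        = P ⟨n, hnr⟩ (ψ + η) := by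
      rw [htake, List.foldl_append, hfold]
      simp
    set i : Fin r := ⟨n, hnr⟩
    refine ⟨(P i ψ - ψ) + P i η, ?_, ?_⟩
    · rw [hfold']
      simp [map_add]
      abel
    · have h1 : ‖P i ψ - ψ‖ ≤ Real.sqrt ε := by
        have horth := proj_orth (P i) (hidem i) (hsym i) ψ
        have : ‖ψ - P i ψ‖ ^ 2 ≤ ε := by
          have := hnorm i
          nlinarith
        have hle : ‖ψ - P i ψ‖ ≤ Real.sqrt ε := by
          rw [← Real.sqrt_sq (norm_nonneg _)]
          exact Real.sqrt_le_sqrt this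
        rwa [← norm_neg, neg_sub]
      have h2 : ‖P i η‖ ≤ n * Real.sqrt ε :=
        le_trans (proj_norm_le (P i) (hidem i) (hsym i) η) hη
      calc ‖(P i ψ - ψ) + P i η‖ ≤ ‖P i ψ - ψ‖ + ‖P i η‖ := norm_add_le _ _
        _ ≤ Real.sqrt ε + n * Real.sqrt ε := add_le_add h1 h2
        _ = (n + 1 : ℕ) * Real.sqrt ε := by push_cast; ring
end

section
/- Let m ∈ ℕ and θ, a, b : Fin m → Bool. If for every index i either (θ_i = false and a_i = false) or (θ_i = true and b_i = false), then Π_θ^eq |φ⁺_{ab}⟩ = |φ⁺_{ab}⟩; otherwise Π_θ^eq |φ⁺_{ab}⟩ = 0. -/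
open Matrix Kronecker

/-- Single-qubit entry of the tensor-product Hadamard unitary `H^θ`:
`c = (1/√2)·(−1)^{u·v}` when the basis bit is `true` (Hadamard basis) and
`c = δ_{u,v}` when it is `false` (computational basis). -/
noncomputable def hadEntry (t u v : Bool) : ℂ :=
  if t then (((Real.sqrt 2)⁻¹ : ℝ) : ℂ) * (if u && v then -1 else 1)
  else if u = v then 1 else 0

/-- The tensor-product Hadamard unitary `H^θ` on `m` qubits. -/
noncomputable def hadTheta {m : ℕ} (θ : Fin m → Bool) :
    Matrix (Fin m → Bool) (Fin m → Bool) ℂ :=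
  Matrix.of fun u v => ∏ i, hadEntry (θ i) (u i) (v i)

/-- The `m`-qubit EPR state `|φ⁺⟩ = 2^{-m/2} ∑_v |v⟩ ⊗ |v⟩`. -/
noncomputable def epr (m : ℕ) : (Fin m → Bool) × (Fin m → Bool) → ℂ :=
  fun p => if p.1 = p.2 then (((Real.sqrt (2 ^ m))⁻¹ : ℝ) : ℂ) else 0

/-- The inner product `b·v = ∑ i, b_i·v_i` (as a natural number). -/
def dotB {m : ℕ} (b v : Fin m → Bool) : ℕ := ∑ i, (if b i && v i then 1 else 0)

/-- The Pauli operator `X^a Z^b`, with `X^a Z^b |v⟩ = (−1)^{b·v} |v ⊕ a⟩`. -/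
noncomputable def XZ {m : ℕ} (a b : Fin m → Bool) :
    Matrix (Fin m → Bool) (Fin m → Bool) ℂ :=
  Matrix.of fun u v => if u = xorV v a then (-1 : ℂ) ^ dotB b v else 0

/-- The damaged EPR state `|φ⁺_{ab}⟩ = (1 ⊗ X^a Z^b)|φ⁺⟩`. -/
noncomputable def phiAB {m : ℕ} (a b : Fin m → Bool) :
    (Fin m → Bool) × (Fin m → Bool) → ℂ :=
  ((1 : Matrix (Fin m → Bool) (Fin m → Bool) ℂ) ⊗ₖ XZ a b).mulVec (epr m)

/-- The projector `Π_θ^eq = ∑_v (H^θ|v⟩⟨v|H^θ) ⊗ (H^θ|v⟩⟨v|H^θ)` onto states of two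
`m`-qubit registers yielding equal outcomes when both are measured in the `H^θ` basis. -/
noncomputable def PiEq {m : ℕ} (θ : Fin m → Bool) :
    Matrix ((Fin m → Bool) × (Fin m → Bool)) ((Fin m → Bool) × (Fin m → Bool)) ℂ :=
  ∑ v : Fin m → Bool,
    (hadTheta θ * Matrix.single v v 1 * hadTheta θ) ⊗ₖ
      (hadTheta θ * Matrix.single v v 1 * hadTheta θ)

/-- Hamming weight of a Boolean string. -/
def hw {m : ℕ} (a : Fin m → Bool) : ℕ := ∑ i, (if a i then 1 else 0)

/-- `Π_t^EPR = ∑_{a,b : w(a) ≤ t, w(b) ≤ t} |φ⁺_{ab}⟩⟨φ⁺_{ab}|`, the projector onto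
the span of EPR pairs with at most `t` Pauli errors of each type. -/
noncomputable def PiEPR (m t : ℕ) :
    Matrix ((Fin m → Bool) × (Fin m → Bool)) ((Fin m → Bool) × (Fin m → Bool)) ℂ :=
  ∑ a : Fin m → Bool, ∑ b : Fin m → Bool,
    if hw a ≤ t ∧ hw b ≤ t then Matrix.vecMulVec (phiAB a b) (star (phiAB a b)) else 0

lemma had_sandwich {m : ℕ} (θ : Fin m → Bool) (v u p : Fin m → Bool) :
    (hadTheta θ * Matrix.single v v 1 * hadTheta θ : Matrix (Fin m → Bool) (Fin m → Bool) ℂ) u p =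
      (∏ i, hadEntry (θ i) (u i) (v i)) * ∏ i, hadEntry (θ i) (v i) (p i) := by
  simp [Matrix.mul_apply, Matrix.single, hadTheta, ite_and, Finset.sum_ite_eq,
    Finset.mul_sum, Finset.sum_mul]

lemma phiAB_apply {m : ℕ} (a b : Fin m → Bool) (u w : Fin m → Bool) :
    phiAB a b (u, w) =
      if w = xorV u a then (-1 : ℂ) ^ dotB b u * (((Real.sqrt (2 ^ m))⁻¹ : ℝ) : ℂ) else 0 := by
  simp [phiAB, Matrix.mulVec, dotProduct, Fintype.sum_prod_type, epr, XZ, Matrix.one_apply,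
    Finset.sum_ite_eq, ite_and, mul_ite, ite_mul]
  rw [Finset.sum_eq_single u]
  · simp
  · intro x _ hx
    simp [Ne.symm hx]
  · simp
lemma sqrt2_pow4 : (((Real.sqrt 2 : ℝ) : ℂ))⁻¹ ^ 4 = 1/4 := by
  rw [inv_pow]
  norm_num
  rw [show (4:ℕ) = 2*2 by rfl, pow_mul]
  norm_cast
  rw [Real.sq_sqrt (by norm_num)]
  norm_num

lemma qubit_sum (t α β x y : Bool) :
    (∑ p : Bool, ∑ v : Bool,
        hadEntry t x v * hadEntry t v p * (hadEntry t y v * hadEntry t v (xor p α)) *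
          (if β && p then (-1 : ℂ) else 1)) =
      if (t = false ∧ α = false) ∨ (t = true ∧ β = false) then
        (if y = xor x α then (if β && x then (-1 : ℂ) else 1) else 0)
      else 0 := by
  have h4 := sqrt2_pow4
  cases t <;> cases α <;> cases β <;> cases x <;> cases y <;>
    simp [hadEntry, Fintype.sum_bool] <;> ring_nf <;> rw [h4] <;> norm_num

lemma neg_one_dotB {m : ℕ} (b p : Fin m → Bool) :
    (-1 : ℂ) ^ dotB b p = ∏ i, (if b i && p i then (-1 : ℂ) else 1) := by
  rw [dotB, ← Finset.prod_pow_eq_pow_sum]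
  exact Finset.prod_congr rfl fun i _ => by cases (b i && p i) <;> simp

lemma interchange {m : ℕ} (F : Fin m → Bool → Bool → ℂ) :
    (∑ p : Fin m → Bool, ∑ v : Fin m → Bool, ∏ i, F i (p i) (v i)) =
      ∏ i, ∑ x : Bool, ∑ y : Bool, F i x y := by
  have h1 : ∀ p : Fin m → Bool, (∑ v : Fin m → Bool, ∏ i, F i (p i) (v i)) =
      ∏ i, ∑ y, F i (p i) y := by
    intro p; rw [← Fintype.piFinset_univ, Finset.sum_prod_piFinset]
  simp_rw [h1]
  rw [← Fintype.piFinset_univ]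
  exact Finset.sum_prod_piFinset Finset.univ fun i z => ∑ y : Bool, F i z y

lemma entry_calc {m : ℕ} (θ a b : Fin m → Bool) (u w : Fin m → Bool) :
    ((PiEq θ).mulVec (phiAB a b)) (u, w) =
      (((Real.sqrt (2 ^ m))⁻¹ : ℝ) : ℂ) *
        ∏ i, (if (θ i = false ∧ a i = false) ∨ (θ i = true ∧ b i = false) then
                (if w i = xor (u i) (a i) then (if b i && u i then (-1 : ℂ) else 1) else 0)
              else 0) := by
  set c : ℂ := (((Real.sqrt (2 ^ m))⁻¹ : ℝ) : ℂ) with hc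
  calc ((PiEq θ).mulVec (phiAB a b)) (u, w)
      = ∑ p : Fin m → Bool, ∑ q : Fin m → Bool,
          (∑ v : Fin m → Bool,
            ((∏ i, hadEntry (θ i) (u i) (v i)) * ∏ i, hadEntry (θ i) (v i) (p i)) *
              ((∏ i, hadEntry (θ i) (w i) (v i)) * ∏ i, hadEntry (θ i) (v i) (q i))) *
            phiAB a b (p, q) := by
        simp [Matrix.mulVec, dotProduct, Fintype.sum_prod_type, PiEq, Matrix.sum_apply,
          had_sandwich]
    _ = ∑ p : Fin m → Bool, ∑ v : Fin m → Bool,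
          ((∏ i, hadEntry (θ i) (u i) (v i)) * ∏ i, hadEntry (θ i) (v i) (p i)) *
            ((∏ i, hadEntry (θ i) (w i) (v i)) * ∏ i, hadEntry (θ i) (v i) (xor (p i) (a i))) *
            ((-1 : ℂ) ^ dotB b p * c) := by
        refine Finset.sum_congr rfl fun p _ => ?_
        simp only [phiAB_apply, mul_ite, mul_zero, Finset.sum_ite_eq', Finset.mem_univ, if_true]
        rw [Finset.sum_mul]
        simp [xorV, hc]
    _ = c * ∑ p : Fin m → Bool, ∑ v : Fin m → Bool,
          ∏ i, (hadEntry (θ i) (u i) (v i) * hadEntry (θ i) (v i) (p i) *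
            (hadEntry (θ i) (w i) (v i) * hadEntry (θ i) (v i) (xor (p i) (a i))) *
            (if b i && p i then (-1 : ℂ) else 1)) := by
        rw [Finset.mul_sum]
        refine Finset.sum_congr rfl fun p _ => ?_
        rw [Finset.mul_sum]
        refine Finset.sum_congr rfl fun v _ => ?_
        rw [neg_one_dotB]
        simp only [Finset.prod_mul_distrib]
        ring
    _ = c * ∏ i, ∑ x : Bool, ∑ y : Bool,
          (hadEntry (θ i) (u i) y * hadEntry (θ i) y x *
            (hadEntry (θ i) (w i) y * hadEntry (θ i) y (xor x (a i))) *
            (if b i && x then (-1 : ℂ) else 1)) := by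
        rw [interchange (fun i x y => hadEntry (θ i) (u i) y * hadEntry (θ i) y x *
          (hadEntry (θ i) (w i) y * hadEntry (θ i) y (xor x (a i))) *
          (if b i && x then (-1 : ℂ) else 1))]
    _ = _ := by
        congr 1
        exact Finset.prod_congr rfl fun i _ => qubit_sum (θ i) (a i) (b i) (u i) (w i)

lemma phiAB_prod {m : ℕ} (a b : Fin m → Bool) (u w : Fin m → Bool) :
    phiAB a b (u, w) =
      (((Real.sqrt (2 ^ m))⁻¹ : ℝ) : ℂ) *
        ∏ i, (if w i = xor (u i) (a i) then (if b i && u i then (-1 : ℂ) else 1) else 0) := by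
  rw [phiAB_apply]
  by_cases h : w = xorV u a
  · have hi : ∀ i, w i = xor (u i) (a i) := fun i => congrFun h i
    rw [if_pos h, neg_one_dotB,
      show (∏ i, (if w i = xor (u i) (a i) then (if b i && u i then (-1 : ℂ) else 1) else 0)) =
          ∏ i, (if b i && u i then (-1 : ℂ) else 1) from
        Finset.prod_congr rfl fun i _ => if_pos (hi i)]
    ring
  · obtain ⟨i, hi⟩ : ∃ i, w i ≠ xor (u i) (a i) := by
      by_contra hc
      push_neg at hc
      exact h (funext hc)
    rw [if_neg h, Finset.prod_eq_zero (Finset.mem_univ i) (by rw [if_neg hi]), mul_zero]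


/-- Unruh's EPR equality lemma (Lemma 26 of the paper): if for every index `i`
either (`θ_i = false` and `a_i = false`) or (`θ_i = true` and `b_i = false`), then
`Π_θ^eq |φ⁺_{ab}⟩ = |φ⁺_{ab}⟩`; otherwise `Π_θ^eq |φ⁺_{ab}⟩ = 0`. -/
theorem unruh_epr_equality (m : ℕ) (θ a b : Fin m → Bool) :
    ((∀ i, (θ i = false ∧ a i = false) ∨ (θ i = true ∧ b i = false)) →
        (PiEq θ).mulVec (phiAB a b) = phiAB a b) ∧
      ((¬ ∀ i, (θ i = false ∧ a i = false) ∨ (θ i = true ∧ b i = false)) →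
        (PiEq θ).mulVec (phiAB a b) = 0) := by
  constructor
  · intro h
    funext uw
    obtain ⟨u, w⟩ := uw
    rw [entry_calc, phiAB_prod]
    congr 1
    exact Finset.prod_congr rfl fun i _ => if_pos (h i)
  · intro h
    obtain ⟨i, hi⟩ : ∃ i, ¬((θ i = false ∧ a i = false) ∨ (θ i = true ∧ b i = false)) := by
      by_contra hc
      push_neg at hc
      exact h hc
    funext uw
    obtain ⟨u, w⟩ := uw
    simp only [Pi.zero_apply]
    have hz : (if (θ i = false ∧ a i = false) ∨ (θ i = true ∧ b i = false) then
        (if w i = xor (u i) (a i) then (if b i && u i then (-1 : ℂ) else 1) else 0)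
        else 0) = 0 := if_neg hi
    rw [entry_calc, Finset.prod_eq_zero (Finset.mem_univ i) hz, mul_zero]
end

section
/- Let m, t ∈ ℕ and a, b : Fin m → Bool with t + 1 ≤ max(w(a), w(b)), where w denotes Hamming weight. Then the number of θ : Fin m → Bool such that for every index i either (θ_i = false and a_i = false) or (θ_i = true and b_i = false) satisfies: (that number) · 2^{t+1} ≤ 2^m. -/
/-- The counting claim from the paper's SSL security proof: for error patterns
`(a, b)` with at least `t + 1` errors, at most a `2^{-(t+1)}` fraction of basis
choices `θ` satisfy the condition of Unruh's EPR equality lemma. -/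
theorem good_theta_count (m t : ℕ) (a b : Fin m → Bool)
    (hweight : t + 1 ≤ max (hw a) (hw b)) :
    (Finset.univ.filter fun θ : Fin m → Bool =>
        ∀ i, (θ i = false ∧ a i = false) ∨ (θ i = true ∧ b i = false)).card *
      2 ^ (t + 1) ≤ 2 ^ m := by
  classical
  set S : Finset (Fin m) := Finset.univ.filter (fun i => a i || b i) with hS
  -- Step 1: t+1 ≤ S.card
  have hhw : ∀ c : Fin m → Bool, hw c = (Finset.univ.filter (fun i => c i = true)).card := by
    intro c
    simp only [hw, Finset.card_filter]
  have hSa : t + 1 ≤ S.card := by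
    rcases max_le_iff.mp (le_refl (max (hw a) (hw b))) with ⟨_, _⟩
    rcases le_max_iff.mp hweight with h | h
    · refine h.trans ?_
      rw [hhw a]
      apply Finset.card_le_card
      intro i hi
      simp only [Finset.mem_filter, Finset.mem_univ, true_and] at hi ⊢
      simp [hS, hi]
    · refine h.trans ?_
      rw [hhw b]
      apply Finset.card_le_card
      intro i hi
      simp only [Finset.mem_filter, Finset.mem_univ, true_and] at hi ⊢
      simp [hS, hi]
  -- allowed values per coordinate
  set A : Fin m → Finset Bool := fun i =>
    Finset.univ.filter (fun x => (x = false ∧ a i = false) ∨ (x = true ∧ b i = false)) with hA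
  have hsubset : (Finset.univ.filter fun θ : Fin m → Bool =>
      ∀ i, (θ i = false ∧ a i = false) ∨ (θ i = true ∧ b i = false)) ⊆
      Fintype.piFinset A := by
    intro θ hθ
    simp only [Finset.mem_filter, Finset.mem_univ, true_and] at hθ
    simp only [Fintype.mem_piFinset, hA, Finset.mem_filter, Finset.mem_univ, true_and]
    exact hθ
  have hcard : (Finset.univ.filter fun θ : Fin m → Bool =>
      ∀ i, (θ i = false ∧ a i = false) ∨ (θ i = true ∧ b i = false)).card ≤
      ∏ i, (A i).card := by
    rw [← Fintype.card_piFinset]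
    exact Finset.card_le_card hsubset
  have hpow : (2 : ℕ) ^ S.card = ∏ i, (if a i || b i then 2 else 1) := by
    rw [Finset.prod_ite, Finset.prod_const, Finset.prod_const, one_pow, mul_one, hS]
  have hkey : (∏ i, (A i).card) * 2 ^ S.card ≤ 2 ^ m := by
    rw [hpow, ← Finset.prod_mul_distrib]
    calc ∏ i, (A i).card * (if a i || b i then 2 else 1)
        ≤ ∏ _i : Fin m, 2 := by
          apply Finset.prod_le_prod (fun _ _ => Nat.zero_le _)
          intro i _
          rcases Bool.eq_false_or_eq_true (a i) with ha | ha <;>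
            rcases Bool.eq_false_or_eq_true (b i) with hb | hb <;>
            simp [hA, ha, hb, Finset.filter_eq', Finset.filter_or]
      _ = 2 ^ m := by simp
  calc (Finset.univ.filter fun θ : Fin m → Bool =>
        ∀ i, (θ i = false ∧ a i = false) ∨ (θ i = true ∧ b i = false)).card * 2 ^ (t + 1)
      ≤ (∏ i, (A i).card) * 2 ^ S.card :=
        Nat.mul_le_mul hcard (Nat.pow_le_pow_right (by norm_num) hSa)
    _ ≤ 2 ^ m := hkey
end
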